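/- For every t ∈ ℂ with t ∉ {0, μ³, 1/μ}, the derivative of the composition ψ∘λ at t equals (ψ∘λ)′(t) = −(1−μ⁴)²·(t − μ²/t)/(μ·t·(1−μt)²·(1−μ³/t)²). -/

import Mathlib

open Complex Set Filter MeasureTheory

/-- `μ = (R - √(R²-4))/2`. -/
noncomputable def mu (R : ℝ) : ℝ := (R - Real.sqrt (R ^ 2 - 4)) / 2

/-- The Möbius transformation `λ(z) = (z - μ)/(μz - 1)`. -/
noncomputable def lam (R : ℝ) (z : ℂ) : ℂ := (z - (mu R : ℂ)) / ((mu R : ℂ) * z - 1)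

/-- The shifted Zhukovsky-type map `ψ(w) = Rw - 1 + 1/(Rw - 1)`. -/
noncomputable def psi (R : ℝ) (w : ℂ) : ℂ := (R : ℂ) * w - 1 + ((R : ℂ) * w - 1)⁻¹

/-- `χ(t) = t ∑_{k ∈ ℤ} μ^{4k} exp((μ - 1/μ) μ^{4k} t)`. -/
noncomputable def chi (R : ℝ) (t : ℂ) : ℂ :=
  t * ∑' k : ℤ, (mu R : ℂ) ^ (4 * k) *
    Complex.exp (((mu R : ℂ) - (mu R : ℂ)⁻¹) * (mu R : ℂ) ^ (4 * k) * t)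

/-- The region `D = {t : |t - 1/R| < 1/R, Re t > Rμ²/2}`. -/
def Dset (R : ℝ) : Set ℂ :=
  {t | ‖t - 1 / (R : ℂ)‖ < 1 / R ∧ R * (mu R) ^ 2 / 2 < t.re}

/-- The region `𝔇 = {w : |w - R/(R²-1)| > 1/(R²-1), |w| < 1}`. -/
def frakD (R : ℝ) : Set ℂ :=
  {w | 1 / (R ^ 2 - 1) < ‖w - (R : ℂ) / (((R : ℝ) ^ 2 - 1 : ℝ) : ℂ)‖ ∧
    ‖w‖ < 1}

/-- The orthogonality domain `G₁ = ψ(𝔇)`. -/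
noncomputable def G1 (R : ℝ) : Set ℂ := psi R '' frakD R

/-- `p` is the sequence of Carleman (Bergman) orthonormal polynomials of `G₁`:
`p n` has degree `n`, real positive leading coefficient, and
`(1/π) ∫_{G₁} pₙ conj(pₘ) dA = δ_{n,m}`. -/
def IsCarleman (R : ℝ) (p : ℕ → Polynomial ℂ) : Prop :=
  (∀ n, (p n).natDegree = n) ∧
  (∀ n, 0 < (p n).leadingCoeff.re ∧ (p n).leadingCoeff.im = 0) ∧
  (∀ n m, ∫ z in G1 R, (p n).eval z * (starRingEnd ℂ) ((p m).eval z) =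
      if n = m then (Real.pi : ℂ) else 0)

/-- The limit functions `f_q` of Theorem 1.1. -/
noncomputable def fq (R q : ℝ) (t : ℂ) : ℂ :=
  (1 - (mu R : ℂ) * t) ^ 2 * (1 - (mu R : ℂ) ^ 3 / t) ^ 2 / ((1 - (mu R : ℂ) ^ 4) * R) *
    ((chi R ((((mu R) ^ (4 * q) : ℝ) : ℂ) * t) -
        chi R ((((mu R) ^ (4 * q + 2) : ℝ) : ℂ) / t)) /
      (t - (mu R : ℂ) ^ 2 / t))

/-- `Gₙ(t) = μ^{-n} λ(t)ⁿ λ'(t)`. -/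
noncomputable def Gfun (R : ℝ) (n : ℕ) (t : ℂ) : ℂ :=
  ((mu R : ℂ) ^ n)⁻¹ * (lam R t) ^ n * deriv (lam R) t

/-- `(ψ∘λ)'(t) = -(1-μ⁴)²(t - μ²/t)/(μ t (1-μt)² (1-μ³/t)²)`. -/
theorem stmt_9 (R : ℝ) (hR : 2 < R) :
    ∀ t : ℂ, t ≠ 0 → t ≠ (mu R : ℂ) ^ 3 → t ≠ ((mu R : ℂ))⁻¹ →
      deriv (fun s => psi R (lam R s)) t =
        -((1 - (mu R : ℂ) ^ 4) ^ 2 * (t - (mu R : ℂ) ^ 2 / t)) /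
          ((mu R : ℂ) * t * (1 - (mu R : ℂ) * t) ^ 2 * (1 - (mu R : ℂ) ^ 3 / t) ^ 2) := by
  intro t ht0 ht3 htinv
  set m : ℂ := (mu R : ℂ) with hmdef
  have hR2 : (0:ℝ) ≤ R ^ 2 - 4 := by nlinarith
  have hs : Real.sqrt (R ^ 2 - 4) ^ 2 = R ^ 2 - 4 := Real.sq_sqrt hR2
  have hmu_pos : 0 < mu R := by
    have hsle : Real.sqrt (R ^ 2 - 4) < R := by
      nlinarith [Real.sqrt_nonneg (R ^ 2 - 4)]
    unfold mu; linarith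
  have hm0 : m ≠ 0 := by
    simp only [hmdef, ne_eq, Complex.ofReal_eq_zero]
    exact ne_of_gt hmu_pos
  have hmeqR : (mu R) ^ 2 - R * mu R + 1 = 0 := by
    unfold mu; nlinarith [hs]
  have hmeq : m ^ 2 - (R : ℂ) * m + 1 = 0 := by
    have := congrArg (fun x : ℝ => (x : ℂ)) hmeqR
    push_cast at this
    simpa [hmdef] using this
  have hReq : (R : ℂ) = (m ^ 2 + 1) / m := by
    rw [eq_div_iff hm0]
    linear_combination -hmeq
  have hden : m * t - 1 ≠ 0 := by
    intro h
    apply htinv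
    have : m * t = 1 := by linear_combination h
    field_simp [hmdef]
    linear_combination this
  have ht3' : t - m ^ 3 ≠ 0 := sub_ne_zero.mpr ht3
  -- derivative of lam
  have hg : HasDerivAt (fun s : ℂ => (s - m) / (m * s - 1))
      ((m ^ 2 - 1) / (m * t - 1) ^ 2) t := by
    have h1 : HasDerivAt (fun s : ℂ => s - m) 1 t := (hasDerivAt_id t).sub_const m
    have h2 : HasDerivAt (fun s : ℂ => m * s - 1) m t := by
      simpa using ((hasDerivAt_id t).const_mul m).sub_const 1
    have := h1.div h2 hden
    rw [show (m ^ 2 - 1) / (m * t - 1) ^ 2 = (1 * (m * t - 1) - (t - m) * m) / (m * t - 1) ^ 2 by ring]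
    exact this
  -- R * lam t - 1 ≠ 0
  have hlam : lam R t = (t - m) / (m * t - 1) := rfl
  have hN : (R : ℂ) * lam R t - 1 = (t - m ^ 3) / (m * (m * t - 1)) := by
    rw [hlam, hReq]
    field_simp
    ring
  have hRw : (R : ℂ) * lam R t - 1 ≠ 0 := by
    rw [hN]
    exact div_ne_zero ht3' (mul_ne_zero hm0 hden)
  -- derivative of psi
  have hid : HasDerivAt (fun w : ℂ => (R : ℂ) * w - 1) (R : ℂ) (lam R t) := by
    simpa using ((hasDerivAt_id (lam R t)).const_mul (R : ℂ)).sub_const 1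
  have hpsi : HasDerivAt (psi R)
      ((R : ℂ) + -(R : ℂ) / ((R : ℂ) * lam R t - 1) ^ 2) (lam R t) := by
    exact hid.add (hid.inv hRw)
  have hcomp : HasDerivAt (fun s => psi R (lam R s))
      (((R : ℂ) + -(R : ℂ) / ((R : ℂ) * lam R t - 1) ^ 2) *
        ((m ^ 2 - 1) / (m * t - 1) ^ 2)) t := by
    have : (fun s => psi R (lam R s)) = (psi R) ∘ (fun s : ℂ => (s - m) / (m * s - 1)) := rfl
    rw [this]
    exact hpsi.comp t hg
  rw [hcomp.deriv, hN, hReq]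
  have hd2 : (1 : ℂ) - m * t ≠ 0 := by
    intro h; apply hden; linear_combination -h
  have hd3 : (1 : ℂ) - m ^ 3 / t ≠ 0 := by
    have e : (1 : ℂ) - m ^ 3 / t = (t - m ^ 3) / t := by
      field_simp
    rw [e]
    exact div_ne_zero ht3' ht0
  have hB : m * t * (1 - m * t) ^ 2 * (1 - m ^ 3 / t) ^ 2 ≠ 0 :=
    mul_ne_zero (mul_ne_zero (mul_ne_zero hm0 ht0) (pow_ne_zero 2 hd2)) (pow_ne_zero 2 hd3)
  have hA : m * (m * t - 1) ^ 2 * (t - m ^ 3) ^ 2 ≠ 0 :=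
    mul_ne_zero (mul_ne_zero hm0 (pow_ne_zero 2 hden)) (pow_ne_zero 2 ht3')
  trans -((1 - m ^ 4) ^ 2 * (t ^ 2 - m ^ 2)) / (m * (m * t - 1) ^ 2 * (t - m ^ 3) ^ 2)
  · rw [div_pow, div_div_eq_mul_div]
    field_simp [hm0, hden, ht3']
    ring
  · rw [div_eq_div_iff hA hB]
    field_simp [ht0]
    ring
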